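/- Suppose h = 1/(4(q+1)) (so that Δ₂ = (1/(q+1))² − 4h/(q+1) = 0) and let E₇ = (2h, 2h). Then the Fréchet derivative of F at E₇ is the linear map given by the matrix J = [[1/2 − 2h, 2h − 1/2], [s·(2h − m), s·(m − 2h)]]; the determinant of J is 0, and its trace equals 1/2 − 2h + s·(m − 2h) = (m − 2h)·(s − s₁) where s₁ = (4h − 1)/(2(m − 2h)), provided m ≠ 2h. In particular, if m ≠ 2h then the trace of J is zero if and only if s = s₁. -/

import Mathlib

/-- The predator–prey vector field
    `F(x,y) = (x(1-x) - q x y - h, s y (1 - y/x)(y - m))`. -/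
noncomputable def F (q s h m : ℝ) (p : ℝ × ℝ) : ℝ × ℝ :=
  (p.1 * (1 - p.1) - q * p.1 * p.2 - h, s * p.2 * (1 - p.2 / p.1) * (p.2 - m))

/-- The continuous linear map `ℝ² → ℝ²` with matrix `[[a, b], [c, d]]`. -/
noncomputable def clm (a b c d : ℝ) : (ℝ × ℝ) →L[ℝ] (ℝ × ℝ) :=
  (a • ContinuousLinearMap.fst ℝ ℝ ℝ + b • ContinuousLinearMap.snd ℝ ℝ ℝ).prod
    (c • ContinuousLinearMap.fst ℝ ℝ ℝ + d • ContinuousLinearMap.snd ℝ ℝ ℝ)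

/-- If `h = 1/(4(q+1))` (so `Δ₂ = 0`) and `E₇ = (2h, 2h)`, the Fréchet derivative of `F`
at `E₇` has matrix `J = [[1/2 - 2h, 2h - 1/2], [s(2h - m), s(m - 2h)]]`; `det J = 0`,
`tr J = 1/2 - 2h + s(m - 2h)`, and if `m ≠ 2h` then `tr J = (m - 2h)(s - s₁)` with
`s₁ = (4h - 1)/(2(m - 2h))`, so `tr J = 0 ↔ s = s₁`. -/
theorem stmt14 (q s h m : ℝ) (hq : 0 < q) (hs : 0 < s) (hh : 0 < h)
    (hm0 : 0 < m) (hm1 : m < 1) (hhval : h = 1/(4*(q+1))) :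
    HasFDerivAt (F q s h m)
      (clm (1/2 - 2*h) (2*h - 1/2) (s*(2*h - m)) (s*(m - 2*h))) ((2*h, 2*h) : ℝ × ℝ) ∧
    (!![1/2 - 2*h, 2*h - 1/2; s*(2*h - m), s*(m - 2*h)] : Matrix (Fin 2) (Fin 2) ℝ).det
      = 0 ∧
    (!![1/2 - 2*h, 2*h - 1/2; s*(2*h - m), s*(m - 2*h)] : Matrix (Fin 2) (Fin 2) ℝ).trace
      = 1/2 - 2*h + s*(m - 2*h) ∧
    (m ≠ 2*h →
      (!![1/2 - 2*h, 2*h - 1/2; s*(2*h - m), s*(m - 2*h)] :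
        Matrix (Fin 2) (Fin 2) ℝ).trace = (m - 2*h)*(s - (4*h - 1)/(2*(m - 2*h)))) ∧
    (m ≠ 2*h →
      ((!![1/2 - 2*h, 2*h - 1/2; s*(2*h - m), s*(m - 2*h)] :
        Matrix (Fin 2) (Fin 2) ℝ).trace = 0 ↔ s = (4*h - 1)/(2*(m - 2*h)))) := by
  have h2h : (2*h) ≠ 0 := by positivity
  have hq0 : (q+1) ≠ 0 := by positivity
  have hq1 : h * (4*(q+1)) = 1 := by rw [hhval]; field_simp
  have htr : (!![1/2 - 2*h, 2*h - 1/2; s*(2*h - m), s*(m - 2*h)] :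
      Matrix (Fin 2) (Fin 2) ℝ).trace = 1/2 - 2*h + s*(m - 2*h) := by
    simp [Matrix.trace_fin_two_of]
  have h4 : m ≠ 2*h →
      (!![1/2 - 2*h, 2*h - 1/2; s*(2*h - m), s*(m - 2*h)] :
        Matrix (Fin 2) (Fin 2) ℝ).trace = (m - 2*h)*(s - (4*h - 1)/(2*(m - 2*h))) := by
    intro hne
    have hsub : m - 2*h ≠ 0 := sub_ne_zero.mpr hne
    rw [htr]
    field_simp
    ring
  refine ⟨?_, ?_, htr, h4, ?_⟩
  · set E : ℝ × ℝ := ((2*h, 2*h) : ℝ × ℝ) with hE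
    have hE1 : E.1 ≠ 0 := h2h
    have hfst : HasFDerivAt (fun p : ℝ × ℝ => p.1) (ContinuousLinearMap.fst ℝ ℝ ℝ) E :=
      hasFDerivAt_fst
    have hsnd : HasFDerivAt (fun p : ℝ × ℝ => p.2) (ContinuousLinearMap.snd ℝ ℝ ℝ) E :=
      hasFDerivAt_snd
    have hinv := (hasFDerivAt_inv hE1).comp E hfst
    have h1 := (((hfst.mul ((hasFDerivAt_const (1:ℝ) E).sub hfst)).sub
        ((hfst.const_mul q).mul hsnd)).sub_const h)
    have h2 := (((hsnd.const_mul s).mul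
        ((hasFDerivAt_const (1:ℝ) E).sub (hsnd.mul hinv))).mul (hsnd.sub_const m))
    have key := HasFDerivAt.prodMk h1 h2
    have heq : F q s h m = fun p : ℝ × ℝ =>
        ((p.1 * (1 - p.1) - q * p.1 * p.2 - h,
          s * p.2 * (1 - p.2 * (p.1)⁻¹) * (p.2 - m)) : ℝ × ℝ) := by
      funext p; simp [F, div_eq_mul_inv]
    rw [heq]
    refine key.congr_fderiv ?_
    refine ContinuousLinearMap.ext fun v => ?_
    have hv1 : E.1 = 2*h := rfl
    have hv2 : E.2 = 2*h := rfl
    refine Prod.ext ?_ ?_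
    · simp [clm, hv1, hv2]
      linear_combination (-1/2 : ℝ) * (v.1 + v.2) * hq1
    · simp [clm, hv1, hv2]
      field_simp
      ring
  · simp [Matrix.det_fin_two_of]
    ring
  · intro hne
    have hsub : m - 2*h ≠ 0 := sub_ne_zero.mpr hne
    rw [h4 hne, mul_eq_zero, sub_eq_zero]
    simp [hne, sub_eq_zero]
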